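/- O(1/k) rate for iBPDCA with (SC1) (Proposition 3.1(v)). In the iBPDCA setting with stopping criterion (SC1), if F is bounded below with ζ := lim_{k→∞} F(x^k), then for every k ≥ 1: min_{0 ≤ i ≤ k−1} D_φ(x^{i+1}, x^i) ≤ (F(x^0) − ζ) / (((1−σ)γ_min − L)·k) and min_{0 ≤ i ≤ k−1} D_φ(x^i, x^{i+1}) ≤ (F(x^0) − ζ)/(γ_min·k). -/

import Mathlib

open Filter Topology Bornology RealInnerProductSpace
open scoped Classical

noncomputable section

/-- `ℝⁿ` with the Euclidean inner product. -/
abbrev E (n : ℕ) := EuclideanSpace ℝ (Fin n)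

/-- Bregman distance `D_φ(x, y) = φ(x) − φ(y) − ⟨∇φ(y), x − y⟩` associated with the
kernel `φ` whose gradient is `φ'`. -/
def breg {n : ℕ} (φ : E n → ℝ) (φ' : E n → E n) (x y : E n) : ℝ :=
  φ x - φ y - ⟪φ' y, x - y⟫

/-- `ε`-subdifferential at `x` of the extended-real-valued convex function that is equal
to `h` on its domain `S` and `+∞` outside `S`:
`∂_ε h(x) = {d : h(y) ≥ h(x) + ⟨d, y − x⟩ − ε for all y}` (the inequality being automatic
for `y ∉ S`). -/
def epsSubdiff {n : ℕ} (S : Set (E n)) (h : E n → ℝ) (ε : ℝ) (x : E n) : Set (E n) :=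
  {d | ∀ y ∈ S, h x + ⟪d, y - x⟫ - ε ≤ h y}

lemma convex_grad_ineq {n : ℕ} {U : Set (EuclideanSpace ℝ (Fin n))}
    {φ : EuclideanSpace ℝ (Fin n) → ℝ} {φ' : EuclideanSpace ℝ (Fin n) → EuclideanSpace ℝ (Fin n)}
    (hUconv : Convex ℝ U)
    (hφdiff : ∀ u ∈ U, HasGradientAt φ (φ' u) u)
    (hφconv : ConvexOn ℝ U φ)
    {u v : EuclideanSpace ℝ (Fin n)} (hu : u ∈ U) (hv : v ∈ U) :
    φ v + ⟪φ' v, u - v⟫ ≤ φ u := by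
  set w := u - v with hw
  have hline : ∀ t : ℝ, HasDerivAt (fun t : ℝ => v + t • w) w t := by
    intro t
    simpa using ((hasDerivAt_id t).smul_const w).const_add v
  have hg : HasDerivAt (fun t : ℝ => φ (v + t • w)) ⟪φ' v, w⟫ 0 := by
    have h1 : HasFDerivAt φ (InnerProductSpace.toDual ℝ _ (φ' v)) v := hφdiff v hv
    have h2 : HasFDerivAt φ (InnerProductSpace.toDual ℝ _ (φ' v)) ((fun t : ℝ => v + t • w) 0) := by
      simpa using h1
    have := h2.comp_hasDerivAt 0 (hline 0)
    exact this
  -- slope inequality on (0,1]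
  have hslope : ∀ t : ℝ, t ∈ Set.Ioc (0:ℝ) 1 →
      slope (fun t : ℝ => φ (v + t • w)) 0 t ≤ φ u - φ v := by
    intro t ht
    have hmem : v + t • w = (1 - t) • v + t • u := by
      simp [hw, smul_sub, sub_smul]; abel
    have hconv := hφconv.2 hv hu (by linarith [ht.2] : (0:ℝ) ≤ 1 - t) ht.1.le (by ring)
    rw [← hmem] at hconv
    have h0 : (v + (0:ℝ) • w) = v := by simp
    rw [slope_def_field, h0, sub_zero, div_le_iff₀ ht.1]
    simp only [smul_eq_mul] at hconv
    nlinarith [hconv]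
  have htend : Tendsto (slope (fun t : ℝ => φ (v + t • w)) 0) (𝓝[>] (0:ℝ)) (𝓝 ⟪φ' v, w⟫) :=
    (hasDerivAt_iff_tendsto_slope.mp hg).mono_left (nhdsWithin_mono _ (by
      intro t ht; exact ne_of_gt ht))
  have : ⟪φ' v, w⟫ ≤ φ u - φ v := by
    refine le_of_tendsto htend ?_
    filter_upwards [Ioc_mem_nhdsGT_of_mem (Set.left_mem_Ico.mpr one_pos)] with t ht
    exact hslope t ht
  linarith

/-- **Proposition 3.1(v).** O(1/k) rate for iBPDCA with (SC1). -/
theorem ibpdca_sc1_rate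
    {n : ℕ} (S U X : Set (E n)) (P₁ P₂ f φ : E n → ℝ)
    (f' φ' : E n → E n) (L γmin γmax σ : ℝ)
    (x : ℕ → E n) (γ δ : ℕ → ℝ) (ξ d Δ : ℕ → E n)
    -- `P₁` is proper, lower semicontinuous and convex (domain `S`, real values `P₁` on `S`)
    (hSne : S.Nonempty)
    (hP₁conv : ConvexOn ℝ S P₁)
    (hP₁lsc : LowerSemicontinuous (fun y => if y ∈ S then (P₁ y : EReal) else (⊤ : EReal)))
    -- `P₂` is convex and continuous
    (hP₂conv : ConvexOn ℝ Set.univ P₂) (hP₂cont : Continuous P₂)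
    -- `f` and `φ` are differentiable on the open convex set `U`, `φ` strictly convex on `U`
    (hUopen : IsOpen U) (hUconv : Convex ℝ U)
    (hfdiff : ∀ u ∈ U, HasGradientAt f (f' u) u)
    (hφdiff : ∀ u ∈ U, HasGradientAt φ (φ' u) u)
    (hφsc : StrictConvexOn ℝ U φ)
    -- `(f, φ)` is `L`-smooth adaptable restricted on `X`
    (hL : 0 ≤ L)
    (hsmad : ∀ u ∈ X, ∀ v ∈ X, |f v - f u - ⟪f' u, v - u⟫| ≤ L * breg φ φ' v u)
    -- the iterates and the inexact optimality condition
    (hxmem : ∀ k, x k ∈ S ∩ U ∩ X)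
    (hLγ : L < γmin) (hγ : ∀ k, γmin ≤ γ k ∧ γ k ≤ γmax)
    (hδpos : ∀ k, 0 ≤ δ k)
    (hξ : ∀ k, ξ k ∈ epsSubdiff Set.univ P₂ 0 (x k))
    (hd : ∀ k, d (k + 1) ∈ epsSubdiff S P₁ (δ k) (x (k + 1)))
    (hΔ : ∀ k, Δ k = d (k + 1) + f' (x k) - ξ k + γ k • (φ' (x (k + 1)) - φ' (x k)))
    -- the stopping criterion
    (hσ0 : 0 ≤ σ) (hσ : σ < (γmin - L) / γmin)
    (hSC1 : ∀ k, ‖Δ k‖ ^ 2 + |⟪Δ k, x (k + 1) - x k⟫| + δ k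
        ≤ σ * γ k * breg φ φ' (x (k + 1)) (x k))
    -- `F` is bounded below, and `ζ` is the limit of `F(x^k)`
    (hFbdd : ∃ mlo : ℝ, ∀ y ∈ S, mlo ≤ P₁ y - P₂ y + f y)
    (ζ : ℝ) (hζ : Tendsto (fun k => P₁ (x k) - P₂ (x k) + f (x k)) atTop (𝓝 ζ)) :
    ∀ k : ℕ, ∀ hk : k ≠ 0,
      (Finset.range k).inf' (Finset.nonempty_range_iff.mpr hk)
          (fun i => breg φ φ' (x (i + 1)) (x i))
        ≤ ((P₁ (x 0) - P₂ (x 0) + f (x 0)) - ζ) / (((1 - σ) * γmin - L) * k)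
      ∧ (Finset.range k).inf' (Finset.nonempty_range_iff.mpr hk)
          (fun i => breg φ φ' (x i) (x (i + 1)))
        ≤ ((P₁ (x 0) - P₂ (x 0) + f (x 0)) - ζ) / (γmin * k) := by
  have hγminpos : 0 < γmin := lt_of_le_of_lt hL hLγ
  have hσγ : σ * γmin < γmin - L := (lt_div_iff₀ hγminpos).mp hσ
  have hc1 : 0 < (1 - σ) * γmin - L := by nlinarith
  set Fv : ℕ → ℝ := fun k => P₁ (x k) - P₂ (x k) + f (x k) with hFv
  have hφconv : ConvexOn ℝ U φ := hφsc.convexOn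
  have hD0 : ∀ a ∈ U, ∀ b ∈ U, 0 ≤ breg φ φ' a b := by
    intro a ha b hb
    have := convex_grad_ineq hUconv hφdiff hφconv ha hb
    simp only [breg]; linarith
  have hmemS : ∀ k, x k ∈ S := fun k => ((hxmem k).1).1
  have hmemU : ∀ k, x k ∈ U := fun k => ((hxmem k).1).2
  have hmemX : ∀ k, x k ∈ X := fun k => (hxmem k).2
  -- the per-step sufficient-descent inequality
  have step : ∀ i : ℕ,
      ((1 - σ) * γmin - L) * breg φ φ' (x (i + 1)) (x i)
        + γmin * breg φ φ' (x i) (x (i + 1)) ≤ Fv i - Fv (i + 1) := by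
    intro i
    set a := x i
    set b := x (i + 1)
    have hA : 0 ≤ breg φ φ' b a := hD0 b (hmemU _) a (hmemU _)
    have hB : 0 ≤ breg φ φ' a b := hD0 a (hmemU _) b (hmemU _)
    have hP1 : P₁ b + ⟪d (i + 1), a - b⟫ - δ i ≤ P₁ a := hd i a (hmemS i)
    have hP2 : P₂ a + ⟪ξ i, b - a⟫ - 0 ≤ P₂ b := hξ i b (Set.mem_univ b)
    have hfu : f b - f a - ⟪f' a, b - a⟫ ≤ L * breg φ φ' b a :=
      (abs_le.mp (hsmad a (hmemX i) b (hmemX (i + 1)))).2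
    have hflip : ⟪d (i + 1), a - b⟫ = -⟪d (i + 1), b - a⟫ := by
      rw [show a - b = -(b - a) by abel, inner_neg_right]
    have hthree : ⟪φ' b - φ' a, b - a⟫ = breg φ φ' b a + breg φ φ' a b := by
      simp only [breg]
      rw [inner_sub_left, show a - b = -(b - a) by abel, inner_neg_right]
      ring
    have hexp : ⟪Δ i, b - a⟫
        = ⟪d (i + 1), b - a⟫ + ⟪f' a, b - a⟫ - ⟪ξ i, b - a⟫
          + γ i * (breg φ φ' b a + breg φ φ' a b) := by
      rw [hΔ i, inner_add_left, inner_sub_left, inner_add_left, real_inner_smul_left, hthree]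
    have hSC := hSC1 i
    have habs : ⟪Δ i, b - a⟫ ≤ |⟪Δ i, b - a⟫| := le_abs_self _
    have hnorm : 0 ≤ ‖Δ i‖ ^ 2 := sq_nonneg _
    have hδi := hδpos i
    have hγi := hγ i
    have p1 : (1 - σ) * γmin * breg φ φ' b a ≤ (1 - σ) * γ i * breg φ φ' b a := by
      apply mul_le_mul_of_nonneg_right _ hA
      apply mul_le_mul_of_nonneg_left hγi.1
      nlinarith
    have p2 : γmin * breg φ φ' a b ≤ γ i * breg φ φ' a b :=
      mul_le_mul_of_nonneg_right hγi.1 hB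
    simp only [hFv]
    nlinarith [hSC, habs, hnorm, hexp, hP1, hP2, hfu, hflip, p1, p2, hδi]
  -- monotonicity and `ζ ≤ F(x^k)`
  have hstep' : ∀ k, Fv (k + 1) ≤ Fv k := by
    intro k
    have h := step k
    have hA : 0 ≤ breg φ φ' (x (k + 1)) (x k) := hD0 _ (hmemU _) _ (hmemU _)
    have hB : 0 ≤ breg φ φ' (x k) (x (k + 1)) := hD0 _ (hmemU _) _ (hmemU _)
    nlinarith [mul_nonneg hc1.le hA, mul_nonneg hγminpos.le hB]
  have hanti : Antitone Fv := antitone_nat_of_succ_le hstep'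
  have hζle : ∀ k, ζ ≤ Fv k := fun k =>
    le_of_tendsto hζ (Filter.eventually_atTop.mpr ⟨k, fun m hm => hanti hm⟩)
  have hFv0 : P₁ (x 0) - P₂ (x 0) + f (x 0) = Fv 0 := rfl
  -- telescoping
  have hsum : ∀ k : ℕ,
      ∑ i ∈ Finset.range k,
        (((1 - σ) * γmin - L) * breg φ φ' (x (i + 1)) (x i)
          + γmin * breg φ φ' (x i) (x (i + 1))) ≤ Fv 0 - Fv k := by
    intro k
    induction k with
    | zero => simp
    | succ k ih =>
      rw [Finset.sum_range_succ]
      have := step k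
      linarith
  intro k hk
  have hkpos : (0 : ℝ) < (k : ℝ) := by
    exact_mod_cast Nat.pos_of_ne_zero hk
  have hne := Finset.nonempty_range_iff.mpr hk
  have hsumk := hsum k
  have hζk := hζle k
  constructor
  · set m₁ := (Finset.range k).inf' hne (fun i => breg φ φ' (x (i + 1)) (x i)) with hm₁
    have hcard : (k : ℝ) * m₁ ≤ ∑ i ∈ Finset.range k, breg φ φ' (x (i + 1)) (x i) := by
      have := Finset.card_nsmul_le_sum (Finset.range k)
        (fun i => breg φ φ' (x (i + 1)) (x i)) m₁ (fun i hi => Finset.inf'_le _ hi)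
      simpa [Finset.card_range, nsmul_eq_mul] using this
    have h1 : ((1 - σ) * γmin - L) * ((k : ℝ) * m₁)
        ≤ ∑ i ∈ Finset.range k, ((1 - σ) * γmin - L) * breg φ φ' (x (i + 1)) (x i) := by
      rw [← Finset.mul_sum]
      exact mul_le_mul_of_nonneg_left hcard hc1.le
    have h2 : ∑ i ∈ Finset.range k, ((1 - σ) * γmin - L) * breg φ φ' (x (i + 1)) (x i)
        ≤ ∑ i ∈ Finset.range k,
          (((1 - σ) * γmin - L) * breg φ φ' (x (i + 1)) (x i)
            + γmin * breg φ φ' (x i) (x (i + 1))) := by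
      apply Finset.sum_le_sum
      intro i hi
      have hB : 0 ≤ breg φ φ' (x i) (x (i + 1)) := hD0 _ (hmemU _) _ (hmemU _)
      nlinarith [mul_nonneg hγminpos.le hB]
    rw [le_div_iff₀ (mul_pos hc1 hkpos), hFv0]
    have he : ((1 - σ) * γmin - L) * ((k : ℝ) * m₁)
        = m₁ * (((1 - σ) * γmin - L) * (k : ℝ)) := by ring
    linarith [h1, h2, hsumk, hζk]
  · set m₂ := (Finset.range k).inf' hne (fun i => breg φ φ' (x i) (x (i + 1))) with hm₂
    have hcard : (k : ℝ) * m₂ ≤ ∑ i ∈ Finset.range k, breg φ φ' (x i) (x (i + 1)) := by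
      have := Finset.card_nsmul_le_sum (Finset.range k)
        (fun i => breg φ φ' (x i) (x (i + 1))) m₂ (fun i hi => Finset.inf'_le _ hi)
      simpa [Finset.card_range, nsmul_eq_mul] using this
    have h1 : γmin * ((k : ℝ) * m₂)
        ≤ ∑ i ∈ Finset.range k, γmin * breg φ φ' (x i) (x (i + 1)) := by
      rw [← Finset.mul_sum]
      exact mul_le_mul_of_nonneg_left hcard hγminpos.le
    have h2 : ∑ i ∈ Finset.range k, γmin * breg φ φ' (x i) (x (i + 1))
        ≤ ∑ i ∈ Finset.range k,
          (((1 - σ) * γmin - L) * breg φ φ' (x (i + 1)) (x i)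
            + γmin * breg φ φ' (x i) (x (i + 1))) := by
      apply Finset.sum_le_sum
      intro i hi
      have hA : 0 ≤ breg φ φ' (x (i + 1)) (x i) := hD0 _ (hmemU _) _ (hmemU _)
      nlinarith [mul_nonneg hc1.le hA]
    rw [le_div_iff₀ (mul_pos hγminpos hkpos), hFv0]
    have he : γmin * ((k : ℝ) * m₂) = m₂ * (γmin * (k : ℝ)) := by ring
    linarith [h1, h2, hsumk, hζk]
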